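/- Suppose α < β are real numbers, B ≠ 0, and there exists x̄ ∈ ℝⁿ with α < h(x̄) < β. Then the SDP relaxation is exact: the infimum of f(x) over {x ∈ ℝⁿ : α ≤ h(x) ≤ β} equals the infimum of A•X + 2aᵀx + c over all pairs (x, X) with x ∈ ℝⁿ, X a real symmetric n×n matrix, X − xxᵀ positive semidefinite, and α ≤ B•X + 2bᵀx + d ≤ β, where • denotes the trace inner product of symmetric matrices; both optimal values are taken in the extended reals. -/

import Mathlib

set_option maxHeartbeats 1000000


open Matrix Filter Topology

/-- The quadratic function `x ↦ xᵀ M x + 2 mᵀ x + r`. -/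
noncomputable def qfun {n : ℕ} (M : Matrix (Fin n) (Fin n) ℝ) (m : Fin n → ℝ) (r : ℝ)
    (x : Fin n → ℝ) : ℝ :=
  x ⬝ᵥ M *ᵥ x + 2 * (m ⬝ᵥ x) + r

namespace GtrsAux

lemma dp_symm {n : ℕ} (M : Matrix (Fin n) (Fin n) ℝ) (hM : M.IsSymm) (x y : Fin n → ℝ) :
    x ⬝ᵥ M *ᵥ y = y ⬝ᵥ M *ᵥ x := by
  rw [Matrix.dotProduct_mulVec, ← Matrix.vecMul_transpose, hM.eq, dotProduct_comm]

lemma qfun_expand2 {n : ℕ} (M : Matrix (Fin n) (Fin n) ℝ) (hM : M.IsSymm) (m : Fin n → ℝ)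
    (r : ℝ) (x y : Fin n → ℝ) (s t : ℝ) :
    qfun M m r (s • x + t • y) =
      s^2 * (x ⬝ᵥ M *ᵥ x) + 2*s*t*(x ⬝ᵥ M *ᵥ y) + t^2*(y ⬝ᵥ M *ᵥ y)
        + 2*s*(m ⬝ᵥ x) + 2*t*(m ⬝ᵥ y) + r := by
  have h := dp_symm M hM x y
  simp only [qfun, mulVec_add, mulVec_smul, dotProduct_add, add_dotProduct,
    dotProduct_smul, smul_dotProduct, smul_eq_mul]
  rw [← h]
  ring

lemma qfun_add_smul {n : ℕ} (M : Matrix (Fin n) (Fin n) ℝ) (hM : M.IsSymm) (m : Fin n → ℝ)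
    (r : ℝ) (x y : Fin n → ℝ) (t : ℝ) :
    qfun M m r (x + t • y) =
      qfun M m r x + 2*t*(x ⬝ᵥ M *ᵥ y + m ⬝ᵥ y) + t^2*(y ⬝ᵥ M *ᵥ y) := by
  have h := qfun_expand2 M hM m r x y 1 t
  rw [one_smul] at h
  rw [h, qfun]
  ring

lemma quad_unbdd (U G E M : ℝ) (hU : U < 0) : ∃ t : ℝ, U*t^2 + 2*G*t + E ≤ M := by
  have h1 : Tendsto (fun t:ℝ => U*t + 2*G) atTop atBot :=
    tendsto_atBot_add_const_right _ _ (Tendsto.const_mul_atTop_of_neg hU tendsto_id)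
  have h2 : Tendsto (fun t:ℝ => t*(U*t + 2*G)) atTop atBot :=
    Tendsto.atTop_mul_atBot₀ tendsto_id h1
  have h3 : Tendsto (fun t:ℝ => t*(U*t+2*G) + E) atTop atBot :=
    tendsto_atBot_add_const_right _ _ h2
  obtain ⟨t, ht⟩ := (h3.eventually (Filter.eventually_le_atBot M)).exists
  exact ⟨t, by nlinarith⟩

lemma dotProduct_self_pos {n : ℕ} (q : Fin n → ℝ) (h : q ≠ 0) : 0 < q ⬝ᵥ q := by
  have hne : q ⬝ᵥ q ≠ 0 := fun hc => h (dotProduct_self_eq_zero.mp hc)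
  have h0 : 0 ≤ q ⬝ᵥ q := Finset.sum_nonneg fun i _ => mul_self_nonneg _
  exact lt_of_le_of_ne h0 (Ne.symm hne)

lemma exists_quad_ne {n : ℕ} (B : Matrix (Fin n) (Fin n) ℝ) (hB : B.IsSymm) (hBne : B ≠ 0) :
    ∃ q : Fin n → ℝ, q ⬝ᵥ B *ᵥ q ≠ 0 := by
  by_contra hcon
  push_neg at hcon
  apply hBne
  have h2 : ∀ u v : Fin n → ℝ, u ⬝ᵥ B *ᵥ v = 0 := by
    intro u v
    have h3 := hcon (u + v)
    have h4 : v ⬝ᵥ B *ᵥ u = u ⬝ᵥ B *ᵥ v := dp_symm B hB v u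
    simp only [mulVec_add, dotProduct_add, add_dotProduct, hcon u, hcon v] at h3
    rw [h4] at h3
    linarith [hcon u, hcon v]
  ext i j
  have h5 := h2 (Pi.single i 1) (Pi.single j 1)
  simpa [dotProduct, mulVec, Pi.single_apply, Finset.sum_ite_eq] using h5

lemma root_choice (R W U G : ℝ) (hR : R ≠ 0) :
    ∃ t : ℝ, R*t^2 + 2*W*t - R = 0 ∧ U*(t^2-1) + 2*G*t ≤ 0 := by
  set D := Real.sqrt (W^2 + R^2) with hD
  have hD2 : D^2 = W^2 + R^2 := Real.sq_sqrt (by positivity)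
  set t₁ := (-W + D)/R with ht₁
  set t₂ := (-W - D)/R with ht₂
  have h1 : R*t₁^2 + 2*W*t₁ - R = 0 := by
    rw [ht₁]; field_simp; linear_combination hD2
  have h2 : R*t₂^2 + 2*W*t₂ - R = 0 := by
    rw [ht₂]; field_simp; linear_combination hD2
  have htt : t₁*t₂ = -1 := by
    rw [ht₁, ht₂]; field_simp; linear_combination -hD2
  by_cases hq : U*(t₁^2-1) + 2*G*t₁ ≤ 0
  · exact ⟨t₁, h1, hq⟩
  · refine ⟨t₂, h2, ?_⟩
    have hne : t₁ ≠ 0 := by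
      intro h0; rw [h0] at htt; simp at htt
    have hid : (U*(t₂^2-1) + 2*G*t₂)*t₁^2 = -(U*(t₁^2-1)+2*G*t₁) := by
      linear_combination (U*(t₁*t₂-1) + 2*G*t₁) * htt
    have ht1 : 0 < t₁^2 := by positivity
    nlinarith

end GtrsAux

open GtrsAux

section Main

variable {n : ℕ} {A B : Matrix (Fin n) (Fin n) ℝ} {a b : Fin n → ℝ} {c d α β : ℝ}

/-- If `pᵀBp = 0` and `pᵀAp < 0`, then `f` is unbounded below on the feasible set. -/
lemma lemma3 (hA : A.IsSymm) (hB : B.IsSymm) (hαβ : α < β) (hBne : B ≠ 0)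
    (hSlater : ∃ xbar : Fin n → ℝ, α < qfun B b d xbar ∧ qfun B b d xbar < β)
    (p : Fin n → ℝ) (hpB : p ⬝ᵥ B *ᵥ p = 0) (hpA : p ⬝ᵥ A *ᵥ p < 0) (M : ℝ) :
    ∃ y, α ≤ qfun B b d y ∧ qfun B b d y ≤ β ∧ qfun A a c y ≤ M := by
  by_cases hBp : B *ᵥ p = 0
  · by_cases hbp : b ⬝ᵥ p = 0
    · -- case (i): h is constant along p from the Slater point
      obtain ⟨z, hz1, hz2⟩ := hSlater
      obtain ⟨t, ht⟩ := quad_unbdd (p ⬝ᵥ A *ᵥ p) (z ⬝ᵥ A *ᵥ p + a ⬝ᵥ p) (qfun A a c z) M hpA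
      refine ⟨z + t • p, ?_, ?_, ?_⟩
      · rw [qfun_add_smul B hB b d z p t, hBp]
        simp only [dotProduct_zero, hbp, add_zero, mul_zero]
        linarith
      · rw [qfun_add_smul B hB b d z p t, hBp]
        simp only [dotProduct_zero, hbp, add_zero, mul_zero]
        linarith
      · rw [qfun_add_smul A hA a c z p t]
        nlinarith [ht]
    · -- case (iii): B *ᵥ p = 0, b ⬝ᵥ p ≠ 0
      obtain ⟨q, hq⟩ := exists_quad_ne B hB hBne
      have hpBq : p ⬝ᵥ B *ᵥ q = 0 := by
        rw [dp_symm B hB p q, hBp, dotProduct_zero]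
      obtain ⟨e, he⟩ : ∃ x, x = q ⬝ᵥ B *ᵥ q := ⟨_, rfl⟩
      obtain ⟨m, hm⟩ : ∃ x, x = (α+β)/2 := ⟨_, rfl⟩
      obtain ⟨bq, hbq⟩ : ∃ x, x = b ⬝ᵥ q := ⟨_, rfl⟩
      obtain ⟨bp, hbp'⟩ : ∃ x, x = b ⬝ᵥ p := ⟨_, rfl⟩
      obtain ⟨U, hU⟩ : ∃ x, x = p ⬝ᵥ A *ᵥ p := ⟨_, rfl⟩
      obtain ⟨α₁, hα₁⟩ : ∃ x, x = p ⬝ᵥ A *ᵥ q := ⟨_, rfl⟩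
      obtain ⟨α₂, hα₂⟩ : ∃ x, x = a ⬝ᵥ p := ⟨_, rfl⟩
      obtain ⟨α₃, hα₃⟩ : ∃ x, x = q ⬝ᵥ A *ᵥ q := ⟨_, rfl⟩
      obtain ⟨α₄, hα₄⟩ : ∃ x, x = a ⬝ᵥ q := ⟨_, rfl⟩
      have he0 : e ≠ 0 := by rw [he]; exact hq
      have hbp0 : bp ≠ 0 := by rw [hbp']; exact hbp
      have hUneg : U < 0 := by rw [hU]; exact hpA
      have hbp2 : (2:ℝ)*bp ≠ 0 := mul_ne_zero two_ne_zero hbp0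
      obtain ⟨muL, hmuL⟩ : ∃ x, x = -e/(2*bp) := ⟨_, rfl⟩
      obtain ⟨K, hK⟩ : ∃ f : ℝ → ℝ, f = fun μ => (m - d - μ^2*e - 2*μ*bq)/(2*bp) := ⟨_, rfl⟩
      have hqB : ∀ μ : ℝ, qfun B b d (K μ • p + μ • q) = m := by
        intro μ
        rw [qfun_expand2 B hB b d p q (K μ) μ, hpB, hpBq]
        rw [← he, ← hbq, ← hbp']
        simp only [hK]
        field_simp
        ring
      obtain ⟨ρ, hρ⟩ : ∃ f : ℝ → ℝ, f = fun μ => K μ / μ^2 := ⟨_, rfl⟩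
      have hρlim : Tendsto ρ atTop (𝓝 muL) := by
        have hev : (fun μ : ℝ => (m-d)/(2*bp) * (μ⁻¹)^2 - bq/bp * μ⁻¹ + muL)
            =ᶠ[atTop] ρ := by
          filter_upwards [eventually_ge_atTop (1:ℝ)] with μ hμ
          have hμ0 : μ ≠ 0 := by linarith
          simp only [hρ, hK, hmuL]
          field_simp
          ring
        refine Tendsto.congr' hev ?_
        have l1 : Tendsto (fun μ : ℝ => (m-d)/(2*bp) * (μ⁻¹)^2) atTop (𝓝 ((m-d)/(2*bp) * 0^2)) :=
          (tendsto_inv_atTop_zero.pow 2).const_mul _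
        have l2 : Tendsto (fun μ : ℝ => bq/bp * μ⁻¹) atTop (𝓝 (bq/bp * 0)) :=
          tendsto_inv_atTop_zero.const_mul _
        have := (l1.sub l2).add_const muL
        simpa using this
      obtain ⟨H, hH⟩ : ∃ f : ℝ → ℝ, f = fun μ => U*(ρ μ)^2 + 2*(ρ μ)*α₁*μ⁻¹ + α₃*(μ⁻¹)^2
          + 2*(ρ μ)*α₂*(μ⁻¹)^2 + 2*α₄*(μ⁻¹)^3 + c*(μ⁻¹)^4 := ⟨_, rfl⟩
      have hHlim : Tendsto H atTop (𝓝 (U*muL^2)) := by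
        have l0 : Tendsto (fun μ : ℝ => μ⁻¹) atTop (𝓝 (0:ℝ)) := tendsto_inv_atTop_zero
        have l1 := (hρlim.pow 2).const_mul U
        have l2 := ((hρlim.const_mul 2).mul_const α₁).mul l0
        have l3 := (l0.pow 2).const_mul α₃
        have l4 := ((hρlim.const_mul 2).mul_const α₂).mul (l0.pow 2)
        have l5 := (l0.pow 3).const_mul (2*α₄)
        have l6 := (l0.pow 4).const_mul c
        have hsum := ((((l1.add l2).add l3).add l4).add l5).add l6
        rw [hH]
        convert hsum using 2
        ring
      have hmuL0 : muL ≠ 0 := by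
        rw [hmuL]; exact div_ne_zero (neg_ne_zero.mpr he0) hbp2
      have hHneg : U*muL^2 < 0 := by
        have h1 : 0 < muL^2 := lt_of_le_of_ne (sq_nonneg muL) (Ne.symm (pow_ne_zero 2 hmuL0))
        exact mul_neg_of_neg_of_pos hUneg h1
      have hAlim : Tendsto (fun μ => qfun A a c (K μ • p + μ • q)) atTop atBot := by
        have hprod : Tendsto (fun μ : ℝ => μ^4 * H μ) atTop atBot :=
          Tendsto.atTop_mul_neg hHneg (tendsto_pow_atTop (by norm_num)) hHlim
        refine Tendsto.congr' ?_ hprod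
        filter_upwards [eventually_ge_atTop (1:ℝ)] with μ hμ
        have hμ0 : μ ≠ 0 := by linarith
        rw [qfun_expand2 A hA a c p q (K μ) μ]
        rw [← hU, ← hα₁, ← hα₂, ← hα₃, ← hα₄]
        simp only [hH, hρ]
        field_simp
      obtain ⟨μ, hμM⟩ := (hAlim.eventually (Filter.eventually_le_atBot M)).exists
      refine ⟨K μ • p + μ • q, ?_, ?_, hμM⟩
      · rw [hqB μ, hm]; linarith
      · rw [hqB μ, hm]; linarith
  · -- case (ii): B *ᵥ p ≠ 0
    obtain ⟨q, hqdef⟩ : ∃ q, q = B *ᵥ p := ⟨_, rfl⟩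
    have hq0 : q ≠ 0 := by rw [hqdef]; exact hBp
    obtain ⟨β₁, hβ₁⟩ : ∃ x, x = p ⬝ᵥ B *ᵥ q := ⟨_, rfl⟩
    have hβ₁pos : 0 < β₁ := by
      have h : p ⬝ᵥ B *ᵥ q = q ⬝ᵥ q := by rw [dp_symm B hB p q, hqdef]
      rw [hβ₁, h]
      exact dotProduct_self_pos q hq0
    obtain ⟨β₂, hβ₂⟩ : ∃ x, x = b ⬝ᵥ p := ⟨_, rfl⟩
    obtain ⟨β₃, hβ₃⟩ : ∃ x, x = q ⬝ᵥ B *ᵥ q := ⟨_, rfl⟩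
    obtain ⟨β₄, hβ₄⟩ : ∃ x, x = b ⬝ᵥ q := ⟨_, rfl⟩
    obtain ⟨U, hU⟩ : ∃ x, x = p ⬝ᵥ A *ᵥ p := ⟨_, rfl⟩
    obtain ⟨α₁, hα₁⟩ : ∃ x, x = p ⬝ᵥ A *ᵥ q := ⟨_, rfl⟩
    obtain ⟨α₂, hα₂⟩ : ∃ x, x = a ⬝ᵥ p := ⟨_, rfl⟩
    obtain ⟨α₃, hα₃⟩ : ∃ x, x = q ⬝ᵥ A *ᵥ q := ⟨_, rfl⟩
    obtain ⟨α₄, hα₄⟩ : ∃ x, x = a ⬝ᵥ q := ⟨_, rfl⟩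
    have hUneg : U < 0 := by rw [hU]; exact hpA
    obtain ⟨muL, hmuL⟩ : ∃ x, x = -β₂/β₁ := ⟨_, rfl⟩
    obtain ⟨m, hm⟩ : ∃ x, x = (α+β)/2 := ⟨_, rfl⟩
    obtain ⟨c₀, hc₀⟩ : ∃ x, x = m - muL^2*β₃ - 2*muL*β₄ := ⟨_, rfl⟩
    obtain ⟨μ, hμ⟩ : ∃ f : ℝ → ℝ, f = fun k => (c₀ - d - 2*k*β₂)/(2*β₁*k) := ⟨_, rfl⟩
    have hμlim : Tendsto μ atTop (𝓝 muL) := by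
      have hev : (fun k : ℝ => (c₀-d)/(2*β₁) * k⁻¹ + muL) =ᶠ[atTop] μ := by
        filter_upwards [eventually_ge_atTop (1:ℝ)] with k hk
        have hk0 : k ≠ 0 := by linarith
        simp only [hμ, hmuL]
        field_simp
        ring
      refine Tendsto.congr' hev ?_
      have := (tendsto_inv_atTop_zero.const_mul ((c₀-d)/(2*β₁))).add_const muL
      simpa using this
    have hqB : ∀ k : ℝ, k ≠ 0 → qfun B b d (k • p + μ k • q)
        = c₀ + (μ k)^2*β₃ + 2*(μ k)*β₄ := by
      intro k hk0
      rw [qfun_expand2 B hB b d p q k (μ k), hpB]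
      rw [← hβ₁, ← hβ₂, ← hβ₃, ← hβ₄]
      simp only [hμ]
      field_simp
      ring
    have hqBlim : Tendsto (fun k => qfun B b d (k • p + μ k • q)) atTop (𝓝 m) := by
      have hcont : Tendsto (fun k => c₀ + (μ k)^2*β₃ + 2*(μ k)*β₄) atTop
          (𝓝 (c₀ + muL^2*β₃ + 2*muL*β₄)) := by
        have t1 := ((hμlim.pow 2).mul_const β₃).const_add c₀
        have t2 := (hμlim.const_mul 2).mul_const β₄
        exact t1.add t2
      have hval : c₀ + muL^2*β₃ + 2*muL*β₄ = m := by
        rw [hc₀]; ring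
      rw [← hval]
      refine Tendsto.congr' ?_ hcont
      filter_upwards [eventually_ge_atTop (1:ℝ)] with k hk
      exact (hqB k (by linarith)).symm
    obtain ⟨G, hG⟩ : ∃ f : ℝ → ℝ, f = fun k => U + (2*(μ k)*α₁ + 2*α₂)*k⁻¹
        + ((μ k)^2*α₃ + 2*(μ k)*α₄ + c)*(k⁻¹)^2 := ⟨_, rfl⟩
    have hGlim : Tendsto G atTop (𝓝 U) := by
      have l0 : Tendsto (fun k : ℝ => k⁻¹) atTop (𝓝 (0:ℝ)) := tendsto_inv_atTop_zero
      have l1 : Tendsto (fun k => (2*(μ k)*α₁ + 2*α₂)*k⁻¹) atTop (𝓝 ((2*muL*α₁+2*α₂)*0)) :=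
        (((hμlim.const_mul 2).mul_const α₁).add_const (2*α₂)).mul l0
      have l2 : Tendsto (fun k => ((μ k)^2*α₃ + 2*(μ k)*α₄ + c)*(k⁻¹)^2) atTop
          (𝓝 ((muL^2*α₃+2*muL*α₄+c)*0^2)) :=
        ((((hμlim.pow 2).mul_const α₃).add ((hμlim.const_mul 2).mul_const α₄)).add_const c).mul
          (l0.pow 2)
      have hsum := (l1.const_add U).add l2
      rw [hG]
      convert hsum using 2
      ring
    have hAlim : Tendsto (fun k => qfun A a c (k • p + μ k • q)) atTop atBot := by
      have hprod : Tendsto (fun k : ℝ => k^2 * G k) atTop atBot :=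
        Tendsto.atTop_mul_neg hUneg (tendsto_pow_atTop (by norm_num)) hGlim
      refine Tendsto.congr' ?_ hprod
      filter_upwards [eventually_ge_atTop (1:ℝ)] with k hk
      have hk0 : k ≠ 0 := by linarith
      rw [qfun_expand2 A hA a c p q k (μ k)]
      rw [← hU, ← hα₁, ← hα₂, ← hα₃, ← hα₄]
      simp only [hG, hμ]
      field_simp
      ring
    have evB1 : ∀ᶠ k in atTop, α < qfun B b d (k • p + μ k • q) :=
      hqBlim.eventually (eventually_gt_nhds (by rw [hm]; linarith))
    have evB2 : ∀ᶠ k in atTop, qfun B b d (k • p + μ k • q) < β :=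
      hqBlim.eventually (eventually_lt_nhds (by rw [hm]; linarith))
    have evA : ∀ᶠ k in atTop, qfun A a c (k • p + μ k • q) ≤ M :=
      hAlim.eventually (Filter.eventually_le_atBot M)
    obtain ⟨k, ⟨⟨hk1, hk2⟩, hk3⟩⟩ := ((evB1.and evB2).and evA).exists
    exact ⟨k • p + μ k • q, le_of_lt hk1, le_of_lt hk2, hk3⟩

/-- Key induction: absorbing a list of rank-one terms. -/
lemma key (hA : A.IsSymm) (hB : B.IsSymm) (hαβ : α < β) (hBne : B ≠ 0)
    (hSlater : ∃ xbar : Fin n → ℝ, α < qfun B b d xbar ∧ qfun B b d xbar < β) :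
    ∀ (L : List (Fin n → ℝ)) (x : Fin n → ℝ),
      α ≤ qfun B b d x + (L.map fun v => v ⬝ᵥ B *ᵥ v).sum →
      qfun B b d x + (L.map fun v => v ⬝ᵥ B *ᵥ v).sum ≤ β →
      ∃ y, α ≤ qfun B b d y ∧ qfun B b d y ≤ β ∧
        qfun A a c y ≤ qfun A a c x + (L.map fun v => v ⬝ᵥ A *ᵥ v).sum := by
  intro L
  induction L with
  | nil =>
    intro x h1 h2
    simp only [List.map_nil, List.sum_nil, add_zero] at h1 h2 ⊢
    exact ⟨x, h1, h2, le_refl _⟩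
  | cons p L ih =>
    intro x h1 h2
    simp only [List.map_cons, List.sum_cons] at h1 h2 ⊢
    by_cases hRne : p ⬝ᵥ B *ᵥ p = 0
    · by_cases hUp0 : 0 ≤ p ⬝ᵥ A *ᵥ p
      · obtain ⟨y, hy1, hy2, hy3⟩ := ih x (by rw [hRne] at h1; linarith)
          (by rw [hRne] at h2; linarith)
        exact ⟨y, hy1, hy2, by linarith⟩
      · push_neg at hUp0
        obtain ⟨y, hy1, hy2, hy3⟩ := lemma3 hA hB hαβ hBne hSlater p hRne hUp0
          (qfun A a c x + (p ⬝ᵥ A *ᵥ p + (L.map fun v => v ⬝ᵥ A *ᵥ v).sum))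
        exact ⟨y, hy1, hy2, hy3⟩
    · obtain ⟨t, hroot, hqneg⟩ := root_choice (p ⬝ᵥ B *ᵥ p) (x ⬝ᵥ B *ᵥ p + b ⬝ᵥ p)
        (p ⬝ᵥ A *ᵥ p) (x ⬝ᵥ A *ᵥ p + a ⬝ᵥ p) hRne
      have hB' : qfun B b d (x + t • p) = qfun B b d x + p ⬝ᵥ B *ᵥ p := by
        rw [qfun_add_smul B hB b d x p t]
        nlinarith [hroot]
      have hA' : qfun A a c (x + t • p) ≤ qfun A a c x + p ⬝ᵥ A *ᵥ p := by
        rw [qfun_add_smul A hA a c x p t]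
        nlinarith [hqneg]
      obtain ⟨y, hy1, hy2, hy3⟩ := ih (x + t • p) (by rw [hB']; linarith)
        (by rw [hB']; linarith)
      exact ⟨y, hy1, hy2, by linarith⟩

lemma trace_vecMulVec (M : Matrix (Fin n) (Fin n) ℝ) (x : Fin n → ℝ) :
    ∑ i, ∑ j, M i j * vecMulVec x x i j = x ⬝ᵥ M *ᵥ x := by
  simp only [vecMulVec_apply, dotProduct, mulVec, Finset.mul_sum]
  exact Finset.sum_congr rfl fun i _ => Finset.sum_congr rfl fun j _ => by ring

lemma triple_swap (f : Fin n → Fin n → Fin n → ℝ) :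
    ∑ i, ∑ j, ∑ k, f i j k = ∑ k, ∑ i, ∑ j, f i j k :=
  calc ∑ i, ∑ j, ∑ k, f i j k
      = ∑ i, ∑ k, ∑ j, f i j k := Finset.sum_congr rfl fun i _ => Finset.sum_comm
    _ = ∑ k, ∑ i, ∑ j, f i j k := Finset.sum_comm

lemma trace_CtC (M C : Matrix (Fin n) (Fin n) ℝ) :
    ∑ i, ∑ j, M i j * (Cᴴ * C) i j
      = ∑ k, (fun i => C k i) ⬝ᵥ M *ᵥ (fun i => C k i) := by
  simp only [Matrix.mul_apply, Matrix.conjTranspose_apply, star_trivial, dotProduct, mulVec,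
    Finset.mul_sum]
  rw [triple_swap (fun i j k => M i j * (C k i * C k j))]
  exact Finset.sum_congr rfl fun k _ => Finset.sum_congr rfl fun i _ =>
    Finset.sum_congr rfl fun j _ => by ring

end Main

/-- Exactness of the primal SDP relaxation for the interval bounded generalized
trust region subproblem, under `B ≠ 0` and the Slater condition. -/
theorem gtrs_sdp_exact (n : ℕ) (hn : 0 < n)
    (A B : Matrix (Fin n) (Fin n) ℝ) (hA : A.IsSymm) (hB : B.IsSymm)
    (a b : Fin n → ℝ) (c d : ℝ) (α β : ℝ) (hαβ : α < β)
    (hBne : B ≠ 0)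
    (hSlater : ∃ xbar : Fin n → ℝ, α < qfun B b d xbar ∧ qfun B b d xbar < β) :
    (⨅ x ∈ {x : Fin n → ℝ | α ≤ qfun B b d x ∧ qfun B b d x ≤ β},
        ((qfun A a c x : ℝ) : EReal)) =
      ⨅ p ∈ {p : (Fin n → ℝ) × Matrix (Fin n) (Fin n) ℝ | p.2.IsSymm ∧
          (p.2 - Matrix.vecMulVec p.1 p.1).PosSemidef ∧
          α ≤ (∑ i : Fin n, ∑ j : Fin n, B i j * p.2 i j) + 2 * (b ⬝ᵥ p.1) + d ∧
          (∑ i : Fin n, ∑ j : Fin n, B i j * p.2 i j) + 2 * (b ⬝ᵥ p.1) + d ≤ β},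
        (((∑ i : Fin n, ∑ j : Fin n, A i j * p.2 i j) + 2 * (a ⬝ᵥ p.1) + c : ℝ) : EReal) := by
  apply le_antisymm
  · -- hard direction
    refine le_iInf₂ fun pX hpX => ?_
    obtain ⟨hsym, hpsd, hc1, hc2⟩ := hpX
    obtain ⟨C, hC⟩ : ∃ C : Matrix (Fin n) (Fin n) ℝ, pX.2 - vecMulVec pX.1 pX.1 = Cᴴ * C := by
      open scoped MatrixOrder in exact CStarAlgebra.nonneg_iff_eq_star_mul_self.mp hpsd.nonneg
    have hdecomp : ∀ M : Matrix (Fin n) (Fin n) ℝ,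
        (∑ i, ∑ j, M i j * pX.2 i j)
          = pX.1 ⬝ᵥ M *ᵥ pX.1 + ∑ k, (fun i => C k i) ⬝ᵥ M *ᵥ (fun i => C k i) := by
      intro M
      have hXeq : pX.2 = vecMulVec pX.1 pX.1 + (Cᴴ * C) := by
        rw [← hC]; abel
      rw [hXeq]
      simp only [Matrix.add_apply, mul_add, Finset.sum_add_distrib]
      rw [trace_vecMulVec, trace_CtC]
    set L : List (Fin n → ℝ) := List.ofFn (fun k => fun i => C k i) with hL
    have hsumB : (L.map fun v => v ⬝ᵥ B *ᵥ v).sum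
        = ∑ k, (fun i => C k i) ⬝ᵥ B *ᵥ (fun i => C k i) := by
      rw [hL, List.map_ofFn, List.sum_ofFn]; simp [Function.comp]
    have hsumA : (L.map fun v => v ⬝ᵥ A *ᵥ v).sum
        = ∑ k, (fun i => C k i) ⬝ᵥ A *ᵥ (fun i => C k i) := by
      rw [hL, List.map_ofFn, List.sum_ofFn]; simp [Function.comp]
    have hBval : qfun B b d pX.1 + (L.map fun v => v ⬝ᵥ B *ᵥ v).sum
        = (∑ i, ∑ j, B i j * pX.2 i j) + 2 * (b ⬝ᵥ pX.1) + d := by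
      rw [hsumB, hdecomp B, qfun]; ring
    obtain ⟨y, hy1, hy2, hy3⟩ := key hA hB hαβ hBne hSlater L pX.1
      (by rw [hBval]; exact hc1) (by rw [hBval]; exact hc2)
    have hAval : qfun A a c pX.1 + (L.map fun v => v ⬝ᵥ A *ᵥ v).sum
        = (∑ i, ∑ j, A i j * pX.2 i j) + 2 * (a ⬝ᵥ pX.1) + c := by
      rw [hsumA, hdecomp A, qfun]; ring
    have hy3' : qfun A a c y ≤ (∑ i, ∑ j, A i j * pX.2 i j) + 2 * (a ⬝ᵥ pX.1) + c := by
      rw [← hAval]; exact hy3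
    calc (⨅ x ∈ {x : Fin n → ℝ | α ≤ qfun B b d x ∧ qfun B b d x ≤ β},
        ((qfun A a c x : ℝ) : EReal))
        ≤ ((qfun A a c y : ℝ) : EReal) := iInf₂_le y ⟨hy1, hy2⟩
      _ ≤ _ := EReal.coe_le_coe_iff.mpr hy3'
  · -- easy direction
    refine le_iInf₂ fun x hx => ?_
    obtain ⟨hx1, hx2⟩ := hx
    have hfeas : (x, vecMulVec x x) ∈ {p : (Fin n → ℝ) × Matrix (Fin n) (Fin n) ℝ | p.2.IsSymm ∧
          (p.2 - Matrix.vecMulVec p.1 p.1).PosSemidef ∧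
          α ≤ (∑ i : Fin n, ∑ j : Fin n, B i j * p.2 i j) + 2 * (b ⬝ᵥ p.1) + d ∧
          (∑ i : Fin n, ∑ j : Fin n, B i j * p.2 i j) + 2 * (b ⬝ᵥ p.1) + d ≤ β} := by
      refine ⟨?_, ?_, ?_, ?_⟩
      · show (vecMulVec x x).IsSymm
        unfold Matrix.IsSymm
        ext i j
        simp [vecMulVec_apply, mul_comm]
      · show (vecMulVec x x - vecMulVec x x).PosSemidef
        simpa [sub_self] using (Matrix.PosSemidef.zero (n := Fin n) (R := ℝ))
      · show α ≤ (∑ i, ∑ j, B i j * vecMulVec x x i j) + 2 * (b ⬝ᵥ x) + d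
        rw [trace_vecMulVec B x]
        exact hx1
      · show (∑ i, ∑ j, B i j * vecMulVec x x i j) + 2 * (b ⬝ᵥ x) + d ≤ β
        rw [trace_vecMulVec B x]
        exact hx2
    refine le_trans (iInf₂_le (x, vecMulVec x x) hfeas) (le_of_eq ?_)
    norm_cast
    show (∑ i, ∑ j, A i j * vecMulVec x x i j) + 2 * (a ⬝ᵥ x) + c = qfun A a c x
    rw [trace_vecMulVec A x]
    rfl
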